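/- arXiv:2509.26212 — 4 statements merged into one kernel-verified Lean document; each statement's English description precedes it below -/
import Mathlib

section
/- Every finitely generated nilpotent group G is virtually abelian if and only if its center Z(G) has finite index in G. -/
universe u

/-- A subgroup of a finitely generated commutative group is finitely generated. -/
private lemma my_fg_subgroup_of_comm {G : Type u} [CommGroup G] [Group.FG G] (H : Subgroup G) :
    Group.FG H := by
  haveI : Module.Finite ℤ (Additive G) := Module.Finite.iff_addGroup_fg.mpr inferInstance
  rw [Group.fg_iff_subgroup_fg, Subgroup.fg_iff_add_fg]
  have h : (AddSubgroup.toIntSubmodule H.toAddSubgroup).FG := IsNoetherian.noetherian _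
  have h2 := (Submodule.fg_iff_addSubgroup_fg _).mp h
  rwa [AddSubgroup.toIntSubmodule_toAddSubgroup] at h2

private lemma my_lcs_map_eq {G H : Type*} [Group G] [Group H] (f : G →* H)
    (hf : Function.Surjective f) (n : ℕ) :
    Subgroup.map f (Subgroup.lowerCentralSeries (⊤ : Subgroup G) n) = Subgroup.lowerCentralSeries (⊤ : Subgroup H) n := by
  induction n with
  | zero => simpa using Subgroup.map_top_of_surjective f hf
  | succ n ih =>
    show Subgroup.map f ⁅Subgroup.lowerCentralSeries (⊤ : Subgroup G) n, ⊤⁆ = ⁅Subgroup.lowerCentralSeries (⊤ : Subgroup H) n, ⊤⁆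
    rw [Subgroup.map_commutator, ih, Subgroup.map_top_of_surjective f hf]

private lemma my_finite_of_finite_ker_range {G H : Type*} [Group G] [Group H] (f : G →* H)
    (h1 : Finite f.ker) (h2 : Finite f.range) : Finite G := by
  have e := QuotientGroup.quotientKerEquivRange f
  haveI := h1
  haveI : Finite (G ⧸ f.ker) := Finite.of_equiv _ e.symm.toEquiv
  refine Nat.finite_of_card_ne_zero ?_
  rw [Subgroup.card_eq_card_quotient_mul_card_subgroup f.ker]
  exact Nat.mul_ne_zero Nat.card_pos.ne' Nat.card_pos.ne'

open Subgroup commutatorElement in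
private lemma my_finite_commutator : ∀ (n : ℕ) (G : Type u) [Group G] [Group.FG G]
    (K : Subgroup G), ∀ [K.Normal] [K.FiniteIndex],
    (∀ a ∈ K, ∀ b ∈ K, a * b = b * a) → Subgroup.lowerCentralSeries (⊤ : Subgroup G) n = ⊥ →
    Finite (commutator G) := by
  intro n
  induction n with
  | zero =>
    intro G _ _ K _ _ hK hn
    rw [Subgroup.lowerCentralSeries_zero] at hn
    have hb : commutator G = ⊥ := le_bot_iff.mp (hn ▸ le_top)
    rw [hb]
    infer_instance
  | succ n ih =>
    rcases n with _ | n
    · intro G _ _ K _ _ hK hn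
      rw [Subgroup.top_lowerCentralSeries_one] at hn
      rw [hn]
      infer_instance
    intro G _ _ K _ _ hK hn
    -- A = γ_{n+1}(G) is central since γ_{n+2}(G) = ⊥
    have hAcent : Subgroup.lowerCentralSeries (⊤ : Subgroup G) (n + 1) ≤ Subgroup.center G := by
      intro a ha
      rw [Subgroup.mem_center_iff]
      intro g
      have hm : ⁅a, g⁆ ∈ Subgroup.lowerCentralSeries (⊤ : Subgroup G) (n + 2) :=
        Subgroup.commutator_mem_commutator ha (Subgroup.mem_top g)
      rw [hn, Subgroup.mem_bot, commutatorElement_eq_one_iff_mul_comm] at hm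
      exact hm.symm
    have hcent : ∀ b ∈ Subgroup.lowerCentralSeries (⊤ : Subgroup G) n, ∀ x : G, ⁅b, x⁆ ∈ Subgroup.center G :=
      fun b hb x => hAcent (Subgroup.commutator_mem_commutator hb (Subgroup.mem_top x))
    set m := K.index with hmdef
    have hmne : m ≠ 0 := Subgroup.FiniteIndex.index_ne_zero
    have hpowK : ∀ g : G, g ^ m ∈ K := fun g => Subgroup.pow_index_mem K g
    -- homomorphism properties of the commutator with one entry in γ_n(G)
    have hhom2 : ∀ b ∈ Subgroup.lowerCentralSeries (⊤ : Subgroup G) n, ∀ x y : G, ⁅b, x * y⁆ = ⁅b, x⁆ * ⁅b, y⁆ := by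
      intro b hb x y
      have h1 : ⁅b, x * y⁆ = ⁅b, x⁆ * (x * ⁅b, y⁆ * x⁻¹) := by group
      have h2 : x * ⁅b, y⁆ * x⁻¹ = ⁅b, y⁆ := by
        rw [Subgroup.mem_center_iff.mp (hcent b hb y) x, mul_inv_cancel_right]
      rw [h1, h2]
    have hhom1 : ∀ b₁ ∈ Subgroup.lowerCentralSeries (⊤ : Subgroup G) n, ∀ b₂ ∈ Subgroup.lowerCentralSeries (⊤ : Subgroup G) n, ∀ x : G,
        ⁅b₁ * b₂, x⁆ = ⁅b₁, x⁆ * ⁅b₂, x⁆ := by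
      intro b₁ hb₁ b₂ hb₂ x
      have h1 : ⁅b₁ * b₂, x⁆ = (b₁ * ⁅b₂, x⁆ * b₁⁻¹) * ⁅b₁, x⁆ := by group
      have h2 : b₁ * ⁅b₂, x⁆ * b₁⁻¹ = ⁅b₂, x⁆ := by
        rw [Subgroup.mem_center_iff.mp (hcent b₂ hb₂ x) b₁, mul_inv_cancel_right]
      rw [h1, h2, Subgroup.mem_center_iff.mp (hcent b₂ hb₂ x) ⁅b₁, x⁆]
    have hpow2 : ∀ b ∈ Subgroup.lowerCentralSeries (⊤ : Subgroup G) n, ∀ x : G, ∀ j : ℕ, ⁅b, x⁆ ^ j = ⁅b, x ^ j⁆ := by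
      intro b hb x j
      induction j with
      | zero => simp
      | succ j ihj => rw [pow_succ, pow_succ, ihj, ← hhom2 b hb]
    have hpow1 : ∀ b ∈ Subgroup.lowerCentralSeries (⊤ : Subgroup G) n, ∀ x : G, ∀ j : ℕ, ⁅b, x⁆ ^ j = ⁅b ^ j, x⁆ := by
      intro b hb x j
      induction j with
      | zero => simp
      | succ j ihj =>
        rw [pow_succ, pow_succ, ihj, ← hhom1 (b ^ j) (pow_mem hb j) b hb]
    -- every element of A = γ_{n+1}(G) satisfies a ^ (m * m) = 1
    have hAtor : ∀ a ∈ Subgroup.lowerCentralSeries (⊤ : Subgroup G) (n + 1), a ^ (m * m) = 1 := by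
      let T : Subgroup G :=
        { carrier := {x | x ∈ Subgroup.center G ∧ x ^ (m * m) = 1}
          one_mem' := ⟨Subgroup.one_mem _, one_pow _⟩
          mul_mem' := by
            rintro x y ⟨hx, hx2⟩ ⟨hy, hy2⟩
            refine ⟨Subgroup.mul_mem _ hx hy, ?_⟩
            have hc : Commute x y := (Subgroup.mem_center_iff.mp hx y).symm
            rw [hc.mul_pow, hx2, hy2, one_mul]
          inv_mem' := by
            rintro x ⟨hx, hx2⟩
            exact ⟨Subgroup.inv_mem _ hx, by rw [inv_pow, hx2, inv_one]⟩ }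
      have hle : Subgroup.lowerCentralSeries (⊤ : Subgroup G) (n + 1) ≤ T := by
        show ⁅Subgroup.lowerCentralSeries (⊤ : Subgroup G) n, (⊤ : Subgroup G)⁆ ≤ T
        rw [Subgroup.commutator_le]
        intro b hb g _
        refine ⟨hcent b hb g, ?_⟩
        rw [pow_mul, hpow2 b hb, hpow1 b hb,
          commutatorElement_eq_one_iff_mul_comm.mpr (hK _ (hpowK b) _ (hpowK g))]
      exact fun a ha => (hle ha).2
    -- K is a finitely generated commutative group
    letI cK : CommGroup K := { (inferInstance : Group K) with
      mul_comm := fun a b => Subtype.ext (hK a a.2 b b.2) }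
    haveI : Group.FG K := Subgroup.fg_of_index_ne_zero K
    -- A ∩ K, viewed in K, is finitely generated and torsion, hence finite
    haveI hfinS : Finite ((Subgroup.lowerCentralSeries (⊤ : Subgroup G) (n + 1)).subgroupOf K) := by
      haveI : Group.FG ((Subgroup.lowerCentralSeries (⊤ : Subgroup G) (n + 1)).subgroupOf K) :=
        my_fg_subgroup_of_comm _
      refine CommGroup.finite_of_fg_torsion _ (fun x => ?_)
      refine isOfFinOrder_iff_pow_eq_one.mpr ⟨m * m, Nat.pos_of_ne_zero
        (Nat.mul_ne_zero hmne hmne), ?_⟩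
      have hx : ((x : K) : G) ∈ Subgroup.lowerCentralSeries (⊤ : Subgroup G) (n + 1) := x.2
      have := hAtor _ hx
      ext
      push_cast
      exact this
    -- hence A itself is finite
    haveI hfinA : Finite (Subgroup.lowerCentralSeries (⊤ : Subgroup G) (n + 1)) := by
      haveI : Finite (K.subgroupOf (Subgroup.lowerCentralSeries (⊤ : Subgroup G) (n + 1))) := by
        refine Finite.of_injective
          (fun x : K.subgroupOf (Subgroup.lowerCentralSeries (⊤ : Subgroup G) (n + 1)) =>
            (⟨⟨((x : Subgroup.lowerCentralSeries (⊤ : Subgroup G) (n + 1)) : G), x.2⟩,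
              (x : Subgroup.lowerCentralSeries (⊤ : Subgroup G) (n + 1)).2⟩ :
              (Subgroup.lowerCentralSeries (⊤ : Subgroup G) (n + 1)).subgroupOf K)) ?_
        intro x y h
        rw [Subtype.ext_iff, Subtype.ext_iff] at h
        exact Subtype.ext (Subtype.ext h)
      refine Nat.finite_of_card_ne_zero ?_
      rw [Subgroup.card_eq_card_quotient_mul_card_subgroup
        (K.subgroupOf (Subgroup.lowerCentralSeries (⊤ : Subgroup G) (n + 1)))]
      refine Nat.mul_ne_zero ?_ Nat.card_pos.ne'
      rw [← Subgroup.index]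
      exact Subgroup.FiniteIndex.index_ne_zero
    -- pass to the quotient G / A and apply the induction hypothesis
    set A := Subgroup.lowerCentralSeries (⊤ : Subgroup G) (n + 1) with hAdef
    haveI : A.Normal := inferInstance
    set π := QuotientGroup.mk' A with hπdef
    have hπ : Function.Surjective π := QuotientGroup.mk'_surjective A
    haveI : (K.map π).Normal := Subgroup.Normal.map ‹K.Normal› π hπ
    haveI : (K.map π).FiniteIndex := by
      constructor
      intro h0
      have hcomap : ((K.map π).comap π).index = (K.map π).index :=
        Subgroup.index_comap_of_surjective _ hπ
      have hdvd := Subgroup.index_dvd_of_le (Subgroup.le_comap_map π K)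
      rw [hcomap, h0] at hdvd
      exact hmne (hmdef ▸ zero_dvd_iff.mp hdvd)
    have hKab : ∀ a ∈ K.map π, ∀ b ∈ K.map π, a * b = b * a := by
      rintro a ha b hb
      obtain ⟨x, hx, rfl⟩ := Subgroup.mem_map.mp ha
      obtain ⟨y, hy, rfl⟩ := Subgroup.mem_map.mp hb
      rw [← map_mul, ← map_mul, hK x hx y hy]
    have hQ : Subgroup.lowerCentralSeries (⊤ : Subgroup (G ⧸ A)) (n + 1) = ⊥ := by
      rw [← my_lcs_map_eq π hπ, Subgroup.map_eq_bot_iff, QuotientGroup.ker_mk']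
    haveI hfinQ : Finite (commutator (G ⧸ A)) := ih (G ⧸ A) (K.map π) hKab hQ
    -- assemble: commutator G is finite-by-finite
    set ψ := π.comp (commutator G).subtype with hψdef
    refine my_finite_of_finite_ker_range ψ ?_ ?_
    · refine Finite.of_injective (fun x : ψ.ker => (⟨((x : commutator G) : G), ?_⟩ : A)) ?_
      · have hx := x.2
        rw [MonoidHom.mem_ker] at hx
        exact (QuotientGroup.eq_one_iff _).mp hx
      · intro x y h
        rw [Subtype.ext_iff] at h
        exact Subtype.ext (Subtype.ext h)
    · have hr : ψ.range = commutator (G ⧸ A) := by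
        rw [hψdef, MonoidHom.range_comp, Subgroup.range_subtype]
        show Subgroup.map π ⁅(⊤ : Subgroup G), ⊤⁆ = ⁅(⊤ : Subgroup (G ⧸ A)), ⊤⁆
        rw [Subgroup.map_commutator, Subgroup.map_top_of_surjective π hπ]
      rw [hr]
      exact hfinQ

/-- A finitely generated nilpotent group is virtually abelian iff its center has finite index. -/
theorem stmt3 (G : Type*) [Group G] [Group.FG G] [Group.IsNilpotent G] :
    (∃ H : Subgroup G, H.FiniteIndex ∧ ∀ a ∈ H, ∀ b ∈ H, a * b = b * a) ↔
      (Subgroup.center G).FiniteIndex := by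
  constructor
  · rintro ⟨H, hfin, hab⟩
    haveI := hfin
    obtain ⟨n, hn⟩ := nilpotent_iff_lowerCentralSeries.mp ‹Group.IsNilpotent G›
    have habc : ∀ a ∈ H.normalCore, ∀ b ∈ H.normalCore, a * b = b * a :=
      fun a ha b hb => hab a (H.normalCore_le ha) b (H.normalCore_le hb)
    haveI : Finite (commutator G) := my_finite_commutator n G H.normalCore habc hn
    haveI : Finite (commutatorSet G) := by
      have hsub : commutatorSet G ⊆ (commutator G : Set G) := by
        rintro x ⟨g₁, g₂, hx⟩
        exact hx ▸ Subgroup.commutator_mem_commutator (Subgroup.mem_top g₁) (Subgroup.mem_top g₂)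
      exact Set.Finite.to_subtype (Set.Finite.subset (Set.toFinite _) hsub)
    exact Subgroup.finiteIndex_center
  · intro h
    exact ⟨Subgroup.center G, h, fun a _ b hb => Subgroup.mem_center_iff.mp hb a⟩
end

section
/- Let p be a prime, k = 𝔽_p, and V = k². Let the additive group k act on the abelian group A = ⊕_{n ∈ ℕ} V, where x ∈ k acts on each summand by the matrix [[1, x],[0, 1]]. Then the semidirect product G = A ⋊ k is two-step nilpotent and virtually abelian, but its center has infinite index in G. -/
open Multiplicative SemidirectProduct
open scoped commutatorElement

def tauP (p : ℕ) (x : ZMod p) : (ZMod p × ZMod p) ≃+ (ZMod p × ZMod p) where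
  toFun v := (v.1 + x * v.2, v.2)
  invFun v := (v.1 - x * v.2, v.2)
  left_inv v := by simp
  right_inv v := by simp
  map_add' v w := by simp [Prod.ext_iff]; ring

noncomputable def phiP (p : ℕ) : Multiplicative (ZMod p) →*
    MulAut (Multiplicative (ℕ →₀ (ZMod p × ZMod p))) where
  toFun x := AddEquiv.toMultiplicative (Finsupp.mapRange.addEquiv (tauP p x.toAdd))
  map_one' := by
    ext a : 1
    apply Multiplicative.toAdd.injective
    ext n
    · simp only [MulAut.one_apply]
      show (toAdd a n).1 + toAdd (1 : Multiplicative (ZMod p)) * (toAdd a n).2 = (toAdd a n).1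
      simp
    · simp only [MulAut.one_apply]
      rfl
  map_mul' x y := by
    ext a : 1
    apply Multiplicative.toAdd.injective
    ext n
    · show (toAdd a n).1 + (toAdd x + toAdd y) * (toAdd a n).2 = _
      show _ = ((toAdd a n).1 + toAdd y * (toAdd a n).2) + toAdd x * (toAdd a n).2
      ring
    · rfl

lemma phiP_apply (p : ℕ) (x : Multiplicative (ZMod p))
    (a : Multiplicative (ℕ →₀ (ZMod p × ZMod p))) (n : ℕ) :
    Multiplicative.toAdd (phiP p x a) n =
      ((Multiplicative.toAdd a n).1 + Multiplicative.toAdd x * (Multiplicative.toAdd a n).2,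
        (Multiplicative.toAdd a n).2) := rfl

noncomputable def psiP (p : ℕ) :
    (Multiplicative (ℕ →₀ (ZMod p × ZMod p)) ⋊[phiP p] Multiplicative (ZMod p)) →*
      Multiplicative (ℕ →₀ ZMod p) where
  toFun g := Multiplicative.ofAdd ((Multiplicative.toAdd g.left).mapRange Prod.snd rfl)
  map_one' := by
    show Multiplicative.ofAdd (Finsupp.mapRange _ rfl (0 : ℕ →₀ ZMod p × ZMod p)) = 1
    rw [Finsupp.mapRange_zero]; rfl
  map_mul' g h := by
    show Multiplicative.ofAdd _ = Multiplicative.ofAdd (_ + _)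
    congr 1
    ext n
    show (toAdd (g.left * phiP p g.right h.left) n).2 = (toAdd g.left n).2 + (toAdd h.left n).2
    show (toAdd g.left n + toAdd (phiP p g.right h.left) n).2 = _
    rw [Prod.snd_add, phiP_apply]

lemma memCenterP (p : ℕ)
    (z : Multiplicative (ℕ →₀ (ZMod p × ZMod p)) ⋊[phiP p] Multiplicative (ZMod p))
    (h1 : z.right = 1) (h2 : ∀ n, (Multiplicative.toAdd z.left n).2 = 0) :
    z ∈ Subgroup.center _ := by
  rw [Subgroup.mem_center_iff]
  intro w
  have key : phiP p w.right z.left = z.left := by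
    apply Multiplicative.toAdd.injective
    ext n
    · show ((toAdd (phiP p w.right z.left)) n).1 = _
      rw [phiP_apply, h2 n]
      simp
    · rfl
  ext : 1
  · show w.left * phiP p w.right z.left = z.left * phiP p z.right w.left
    rw [key, h1, map_one, MulAut.one_apply, mul_comm]
  · exact mul_comm _ _

lemma psiP_surj (p : ℕ) : Function.Surjective (psiP p) := by
  intro f
  refine ⟨SemidirectProduct.inl
    (Multiplicative.ofAdd ((toAdd f).mapRange (fun c => ((0 : ZMod p), c)) rfl)), ?_⟩
  apply Multiplicative.toAdd.injective
  ext n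
  show (Finsupp.mapRange Prod.snd rfl (Finsupp.mapRange _ rfl (toAdd f))) n = toAdd f n
  simp [Finsupp.mapRange_apply]



/-- Let `p` be a prime, `k = 𝔽_p`, `V = k²`, and let `k` act on `A = ⊕_{n ∈ ℕ} V` where
`x` acts coordinatewise by `(a, b) ↦ (a + x b, b)`.  The semidirect product `A ⋊ k` is
two-step nilpotent and virtually abelian, but its center has infinite index. -/
theorem stmt4 (p : ℕ) [Fact p.Prime] :
    ∃ φ : Multiplicative (ZMod p) →*
        MulAut (Multiplicative (ℕ →₀ (ZMod p × ZMod p))),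
      (∀ (x : Multiplicative (ZMod p))
          (a : Multiplicative (ℕ →₀ (ZMod p × ZMod p))) (n : ℕ),
        Multiplicative.toAdd (φ x a) n =
          ((Multiplicative.toAdd a n).1 +
              Multiplicative.toAdd x * (Multiplicative.toAdd a n).2,
            (Multiplicative.toAdd a n).2)) ∧
      (commutator (Multiplicative (ℕ →₀ (ZMod p × ZMod p)) ⋊[φ] Multiplicative (ZMod p)) ≤
        Subgroup.center
          (Multiplicative (ℕ →₀ (ZMod p × ZMod p)) ⋊[φ] Multiplicative (ZMod p))) ∧
      (∃ H : Subgroup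
          (Multiplicative (ℕ →₀ (ZMod p × ZMod p)) ⋊[φ] Multiplicative (ZMod p)),
        H.FiniteIndex ∧ ∀ a ∈ H, ∀ b ∈ H, a * b = b * a) ∧
      ¬ (Subgroup.center
          (Multiplicative (ℕ →₀ (ZMod p × ZMod p)) ⋊[φ] Multiplicative (ZMod p))).FiniteIndex := by
  
  haveI : NeZero p := ⟨(Fact.out : p.Prime).ne_zero⟩
  haveI : Fact (1 < p) := ⟨(Fact.out : p.Prime).one_lt⟩
  refine ⟨phiP p, phiP_apply p, ?_, ?_, ?_⟩
  · rw [commutator_def, Subgroup.commutator_le]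
    intro g _ h _
    apply memCenterP
    · have := map_commutatorElement (SemidirectProduct.rightHom
        (φ := phiP p)) g h
      rw [commutatorElement_def] at this ⊢
      simpa [mul_comm] using this
    · intro n
      have h1 : psiP p ⁅g, h⁆ = 1 := by
        rw [map_commutatorElement, commutatorElement_def]
        rw [mul_comm (psiP p g) (psiP p h)]
        group
      have h2 := congrArg (fun m : Multiplicative (ℕ →₀ ZMod p) => Multiplicative.toAdd m n) h1
      simpa [psiP, Finsupp.mapRange_apply, -map_commutatorElement] using h2
  · refine ⟨(SemidirectProduct.rightHom (φ := phiP p)).ker, ⟨?_⟩, ?_⟩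
    · rw [Subgroup.index_ker,
        MonoidHom.range_eq_top.2 SemidirectProduct.rightHom_surjective]
      have : (0 : ℕ) < Nat.card (⊤ : Subgroup (Multiplicative (ZMod p))) := Nat.card_pos
      omega
    · intro a ha b hb
      rw [MonoidHom.mem_ker, SemidirectProduct.rightHom_eq_right] at ha hb
      ext : 1
      · show a.left * phiP p a.right b.left = b.left * phiP p b.right a.left
        rw [ha, hb, map_one, MulAut.one_apply, MulAut.one_apply, mul_comm]
      · exact mul_comm _ _
  · intro hfin
    have hle : Subgroup.center _ ≤ (psiP p).ker := by
      intro z hz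
      rw [Subgroup.mem_center_iff] at hz
      rw [MonoidHom.mem_ker]
      apply Multiplicative.toAdd.injective
      ext n
      have hw := hz (SemidirectProduct.inr (Multiplicative.ofAdd (1 : ZMod p)))
      have hleft := congrArg SemidirectProduct.left hw
      have : toAdd (phiP p (Multiplicative.ofAdd (1 : ZMod p)) z.left) n = toAdd z.left n := by
        have h2 : (SemidirectProduct.inr (Multiplicative.ofAdd (1 : ZMod p)) * z).left
            = (z * SemidirectProduct.inr (Multiplicative.ofAdd (1 : ZMod p))).left := hleft
        rw [SemidirectProduct.mul_left, SemidirectProduct.mul_left] at h2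
        simp only [SemidirectProduct.left_inr, SemidirectProduct.right_inr, one_mul, map_one, MulAut.one_apply, mul_one] at h2
        rw [h2]
      rw [phiP_apply] at this
      have hsnd : (toAdd z.left n).2 = 0 := by
        have := congrArg Prod.fst this
        simpa using this
      show (Finsupp.mapRange Prod.snd rfl (toAdd z.left)) n = (toAdd (1 : Multiplicative (ℕ →₀ ZMod p))) n
      simpa [Finsupp.mapRange_apply] using hsnd
    haveI : ((psiP p).ker).FiniteIndex := Subgroup.finiteIndex_of_le hle
    have h0 : ((psiP p).ker).index = 0 := by
      rw [Subgroup.index_ker, MonoidHom.range_eq_top.2 (psiP_surj p)]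
      haveI : Infinite (ℕ →₀ ZMod p) := Finsupp.infinite_of_left
      rw [Subgroup.card_top]
      exact Nat.card_eq_zero_of_infinite
    exact Subgroup.FiniteIndex.index_ne_zero h0
end

section
/- Let G be a group, and for each n ∈ ℕ let Gₙ ≤ G be a non-abelian two-step nilpotent subgroup, such that [G_m, G_n] = {e} for all m ≠ n. Let Aₙ = [Gₙ,Gₙ] and suppose the subgroup generated by ⋃ₙ Aₙ is the internal direct sum of the Aₙ. Then G is not virtually abelian. -/
open scoped commutatorElement

private lemma swap_aux {G : Type*} [Group G] {u v : G} (h : Commute u v) (x : G) :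
    v * (u * x) = u * (v * x) := by rw [← mul_assoc, ← h.eq, mul_assoc]

private lemma comm_split {G : Type*} [Group G] {am bm an bn : G}
    (h1 : Commute am an) (h2 : Commute am bn) (h3 : Commute bm an) (h4 : Commute bm bn) :
    ⁅am⁻¹ * an, bm⁻¹ * bn⁆ = ⁅am⁻¹, bm⁻¹⁆ * ⁅an, bn⁆ := by
  simp only [commutatorElement_def, mul_inv_rev, inv_inv, mul_assoc,
    h1.symm.eq, h2.symm.eq, h3.symm.eq, h4.symm.eq,
    h1.inv_left.symm.eq, h2.inv_left.symm.eq, h3.inv_left.symm.eq, h4.inv_left.symm.eq,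
    h1.inv_right.symm.eq, h2.inv_right.symm.eq, h3.inv_right.symm.eq, h4.inv_right.symm.eq,
    h1.inv_left.inv_right.symm.eq, h2.inv_left.inv_right.symm.eq,
    h3.inv_left.inv_right.symm.eq, h4.inv_left.inv_right.symm.eq,
    swap_aux h1, swap_aux h2, swap_aux h3, swap_aux h4,
    swap_aux h1.inv_left, swap_aux h2.inv_left, swap_aux h3.inv_left, swap_aux h4.inv_left,
    swap_aux h1.inv_right, swap_aux h2.inv_right, swap_aux h3.inv_right, swap_aux h4.inv_right,
    swap_aux h1.inv_left.inv_right, swap_aux h2.inv_left.inv_right,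
    swap_aux h3.inv_left.inv_right, swap_aux h4.inv_left.inv_right]

/-- If a group `G` contains, for each `n ∈ ℕ`, a non-abelian two-step nilpotent subgroup
`H n`, such that the `H n` pairwise commute and the subgroup generated by the commutator
subgroups `A n = [H n, H n]` is their internal direct sum, then `G` is not virtually
abelian. -/
theorem stmt5 (G : Type*) [Group G] (H : ℕ → Subgroup G)
    (hna : ∀ n : ℕ, ∃ a ∈ H n, ∃ b ∈ H n, a * b ≠ b * a)
    (h2step : ∀ n : ℕ, ∀ a ∈ H n, ∀ b ∈ H n, ∀ c ∈ H n, ⁅⁅a, b⁆, c⁆ = 1)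
    (hcomm : ∀ m n : ℕ, m ≠ n → ∀ a ∈ H m, ∀ b ∈ H n, a * b = b * a)
    (hind : ∀ n : ℕ,
      ⁅H n, H n⁆ ⊓ (⨆ m ∈ {m : ℕ | m ≠ n}, ⁅H m, H m⁆) = ⊥) :
    ¬ ∃ K : Subgroup G, K.FiniteIndex ∧ ∀ a ∈ K, ∀ b ∈ K, a * b = b * a := by
  rintro ⟨K, hK, habK⟩
  choose a ha b hb hab using hna
  haveI := hK
  have hfin : Finite (G ⧸ K) := K.finite_quotient_of_finiteIndex
  obtain ⟨m, n, hmn, hf⟩ := Finite.exists_ne_map_eq_of_infinite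
    (fun k : ℕ => ((a k : G ⧸ K), (b k : G ⧸ K)))
  have hx : (a m)⁻¹ * a n ∈ K := QuotientGroup.eq.mp (congrArg Prod.fst hf)
  have hy : (b m)⁻¹ * b n ∈ K := QuotientGroup.eq.mp (congrArg Prod.snd hf)
  have c1 : Commute (a m) (a n) := hcomm m n hmn _ (ha m) _ (ha n)
  have c2 : Commute (a m) (b n) := hcomm m n hmn _ (ha m) _ (hb n)
  have c3 : Commute (b m) (a n) := hcomm m n hmn _ (hb m) _ (ha n)
  have c4 : Commute (b m) (b n) := hcomm m n hmn _ (hb m) _ (hb n)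
  have hE : ⁅(a m)⁻¹ * a n, (b m)⁻¹ * b n⁆ = 1 :=
    commutatorElement_eq_one_iff_mul_comm.mpr (habK _ hx _ hy)
  rw [comm_split c1 c2 c3 c4] at hE
  have hcm : ⁅(a m)⁻¹, (b m)⁻¹⁆ = (⁅a n, b n⁆)⁻¹ := eq_inv_of_mul_eq_one_left hE
  have mem1 : ⁅(a m)⁻¹, (b m)⁻¹⁆ ∈ ⁅H m, H m⁆ :=
    Subgroup.commutator_mem_commutator (inv_mem (ha m)) (inv_mem (hb m))
  have mem2 : ⁅(a m)⁻¹, (b m)⁻¹⁆ ∈ ⨆ k ∈ {k : ℕ | k ≠ m}, ⁅H k, H k⁆ := by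
    rw [hcm]
    have hle : ⁅H n, H n⁆ ≤ ⨆ k ∈ {k : ℕ | k ≠ m}, ⁅H k, H k⁆ :=
      le_iSup₂ (f := fun k (_ : k ∈ {k : ℕ | k ≠ m}) => ⁅H k, H k⁆) n hmn.symm
    exact hle (inv_mem (Subgroup.commutator_mem_commutator (ha n) (hb n)))
  have : ⁅(a m)⁻¹, (b m)⁻¹⁆ ∈ (⊥ : Subgroup G) := by
    rw [← hind m]; exact ⟨mem1, mem2⟩
  have h1 : ⁅(a m)⁻¹, (b m)⁻¹⁆ = 1 := Subgroup.mem_bot.mp this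
  have hc : Commute (a m)⁻¹ (b m)⁻¹ := commutatorElement_eq_one_iff_mul_comm.mp h1
  have : Commute (a m) (b m) := by
    have := hc.inv_left.inv_right
    simpa using this
  exact hab m this.eq
end

section
/- Let p be a prime, A = 𝔽_p((t)), and s : ℕ_{>0} → {0,1}. Define the group G = A ×_{η_s} A on the set A × A with multiplication (x,a)(y,b) = (x+y, a+b+η_s(x,y)). Then the commutator in G satisfies [(x,a),(y,b)] = (0, η_s(x,y) − η_s(y,x)), and in particular [(tᵃ,0),(tᵇ,0)] = (0, s((b−a)/2) t^{(a+b)/2}) when a < b and a ≡ b mod 2, and equals the identity when a = b or a ≢ b mod 2. -/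
/-- In the central extension `G = A ×_{η_s} A` of `A = 𝔽_p((t))` by itself (with
multiplication `(x,a)(y,b) = (x+y, a+b+η_s(x,y))`) the commutator satisfies
`[(x,a),(y,b)] = (0, η_s(x,y) − η_s(y,x))`; in particular
`[(tᵃ,0),(tᵇ,0)] = (0, s((b−a)/2) t^{(a+b)/2})` when `a < b` and `a ≡ b (mod 2)`, and is
trivial when `a = b` or `a ≢ b (mod 2)`. -/
theorem stmt11 (p : ℕ) [Fact p.Prime] (s : ℕ → ℕ) (hs : ∀ k, s k ≤ 1)
    (η : LaurentSeries (ZMod p) → LaurentSeries (ZMod p) → LaurentSeries (ZMod p))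
    (hη : ∀ (x y : LaurentSeries (ZMod p)) (n : ℤ), (η x y).coeff n =
      ∑ᶠ k : ℕ, if 0 < k ∧ s k = 1 then
        x.coeff (n - (k : ℤ)) * y.coeff (n + (k : ℤ)) else 0) :
    let A := LaurentSeries (ZMod p)
    let m : A × A → A × A → A × A :=
      fun g h => (g.1 + h.1, g.2 + h.2 + η g.1 h.1)
    let inv : A × A → A × A := fun g => (-g.1, -g.2 + η g.1 g.1)
    let comm : A × A → A × A → A × A := fun g h => m (m g h) (inv (m h g))
    (∀ g h : A × A, comm g h = (0, η g.1 h.1 - η h.1 g.1)) ∧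
    (∀ a b : ℤ, a < b → (b - a) % 2 = 0 →
      comm (HahnSeries.single a (1 : ZMod p), 0) (HahnSeries.single b (1 : ZMod p), 0) =
        (0, HahnSeries.single ((a + b) / 2) ((s ((b - a) / 2).toNat : ℕ) : ZMod p))) ∧
    (∀ a b : ℤ, (a = b ∨ (b - a) % 2 ≠ 0) →
      comm (HahnSeries.single a (1 : ZMod p), 0) (HahnSeries.single b (1 : ZMod p), 0) =
        (0, 0)) := by
  intro A m inv comm
  have hneg : ∀ x y : A, η x (-y) = - η x y := by
    intro x y
    ext n
    rw [HahnSeries.coeff_neg, hη, hη]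
    calc (∑ᶠ k : ℕ, if 0 < k ∧ s k = 1 then x.coeff (n - (k : ℤ)) * (-y).coeff (n + (k : ℤ)) else 0)
        = ∑ᶠ k : ℕ, -(if 0 < k ∧ s k = 1 then x.coeff (n - (k : ℤ)) * y.coeff (n + (k : ℤ)) else 0) := by
          congr 1
          funext k
          by_cases hk : 0 < k ∧ s k = 1
          · rw [if_pos hk, if_pos hk, HahnSeries.coeff_neg, mul_neg]
          · rw [if_neg hk, if_neg hk, neg_zero]
      _ = -∑ᶠ k : ℕ, (if 0 < k ∧ s k = 1 then x.coeff (n - (k : ℤ)) * y.coeff (n + (k : ℤ)) else 0) :=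
          ((AddEquiv.neg (ZMod p)).map_finsum _).symm
  have key : ∀ g h : A × A, comm g h = (0, η g.1 h.1 - η h.1 g.1) := by
    intro g h
    have h1 : g.1 + h.1 + -(h.1 + g.1) = 0 := by ring
    have h2 : g.2 + h.2 + η g.1 h.1 + (-(h.2 + g.2 + η h.1 g.1) + η (h.1 + g.1) (h.1 + g.1))
        + η (g.1 + h.1) (-(h.1 + g.1)) = η g.1 h.1 - η h.1 g.1 := by
      rw [hneg, add_comm h.1 g.1]; ring
    exact Prod.ext h1 h2
  have hcoeff : ∀ a b n : ℤ,
      (η (HahnSeries.single a (1 : ZMod p)) (HahnSeries.single b (1 : ZMod p))).coeff n =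
        if 0 < n - a ∧ a + b = 2 * n ∧ s (n - a).toNat = 1 then 1 else 0 := by
    intro a b n
    rw [hη, finsum_eq_single _ (n - a).toNat]
    · simp only [HahnSeries.coeff_single, mul_ite, ite_mul, one_mul, mul_one, mul_zero, zero_mul]
      split_ifs <;> first | rfl | omega
    · intro k hk
      simp only [HahnSeries.coeff_single, mul_ite, ite_mul, one_mul, mul_one, mul_zero, zero_mul]
      split_ifs <;> first | rfl | omega
  refine ⟨key, ?_, ?_⟩
  · intro a b hab hmod
    rw [key]
    refine Prod.ext rfl ?_
    show η _ _ - η _ _ = _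
    ext n
    rw [HahnSeries.coeff_sub, hcoeff, hcoeff, HahnSeries.coeff_single]
    by_cases hn : n = (a + b) / 2
    · have hk : (n - a).toNat = ((b - a) / 2).toNat := by omega
      rw [hk, if_pos hn,
        if_neg (by rintro ⟨h1, h2, -⟩; omega :
          ¬(0 < n - b ∧ b + a = 2 * n ∧ s (n - b).toNat = 1))]
      rcases Nat.le_one_iff_eq_zero_or_eq_one.mp (hs ((b - a) / 2).toNat) with h | h <;>
        rw [h]
      · rw [if_neg (by rintro ⟨-, -, h1⟩; omega)]; simp
      · rw [if_pos ⟨by omega, by omega, rfl⟩]; simp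
    · rw [if_neg hn, if_neg (by rintro ⟨h1, h2, -⟩; omega :
          ¬(0 < n - a ∧ a + b = 2 * n ∧ s (n - a).toNat = 1)),
        if_neg (by rintro ⟨h1, h2, -⟩; omega :
          ¬(0 < n - b ∧ b + a = 2 * n ∧ s (n - b).toNat = 1))]
      simp
  · intro a b h
    rw [key]
    refine Prod.ext rfl ?_
    show η _ _ - η _ _ = _
    rcases h with rfl | hmod
    · exact sub_self _
    · ext n
      rw [HahnSeries.coeff_sub, hcoeff, hcoeff,
        if_neg (by rintro ⟨h1, h2, -⟩; omega :
          ¬(0 < n - a ∧ a + b = 2 * n ∧ s (n - a).toNat = 1)),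
        if_neg (by rintro ⟨h1, h2, -⟩; omega :
          ¬(0 < n - b ∧ b + a = 2 * n ∧ s (n - b).toNat = 1))]
      simp
end
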